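/- Let R be a commutative ring, f ≥ 1, and S = R^f with the ring automorphism φ cyclically shifting coordinates. Let M be an S-module equipped with an additive bijection Φ : M → M satisfying Φ(s·m) = φ(s)·Φ(m) for all s ∈ S, m ∈ M. Write eᵢ ∈ S for the i-th coordinate idempotent, so M = ⊕ᵢ eᵢM and Φ maps eᵢM bijectively onto e_{i+1}M. If e₀M is a free R-module of rank k with basis v₁, …, v_k, then the elements wⱼ = vⱼ + Φ(vⱼ) + Φ²(vⱼ) + ⋯ + Φ^{f-1}(vⱼ) (j = 1,…,k) form an S-basis of M; in particular M is free of rank k over S. -/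

import Mathlib

open Fin.NatCast

/-- Descent for semilinear `Φ`-modules over `S = R^f` with `φ` the cyclic shift:
if `v₁, …, v_k` is an `R`-basis of the component `e₀M`, then the elements
`wⱼ = vⱼ + Φ(vⱼ) + ⋯ + Φ^{f-1}(vⱼ)` form an `S`-basis of `M`. -/
theorem basis_of_shift_semilinear_descent
    {R : Type*} [CommRing R] {f : ℕ} [NeZero f]
    (M : Type*) [AddCommGroup M] [Module (Fin f → R) M]
    (Φ : M → M) (hbij : Function.Bijective Φ)
    (hadd : ∀ x y : M, Φ (x + y) = Φ x + Φ y)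
    (hsemi : ∀ (s : Fin f → R) (x : M), Φ (s • x) = (fun i => s (i - 1)) • Φ x)
    {k : ℕ} (v : Fin k → M)
    (hv0 : ∀ j, (Pi.single (0 : Fin f) (1 : R) : Fin f → R) • v j = v j)
    (hli : ∀ c : Fin k → R,
      ∑ j, (Pi.single (0 : Fin f) (c j) : Fin f → R) • v j = 0 → c = 0)
    (hspan : ∀ x : M, (Pi.single (0 : Fin f) (1 : R) : Fin f → R) • x = x →
      ∃ c : Fin k → R, x = ∑ j, (Pi.single (0 : Fin f) (c j) : Fin f → R) • v j) :
    LinearIndependent (Fin f → R) (fun j => ∑ t ∈ Finset.range f, Φ^[t] (v j)) ∧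
    Submodule.span (Fin f → R)
      (Set.range (fun j => ∑ t ∈ Finset.range f, Φ^[t] (v j))) = ⊤ := by
  -- basic additivity facts for iterates of Φ
  have hadd0 : Φ 0 = 0 := by
    have h := hadd 0 0
    rw [add_zero] at h
    exact (left_eq_add.mp h)
  have hiter_add : ∀ (t : ℕ) (x y : M), Φ^[t] (x + y) = Φ^[t] x + Φ^[t] y := by
    intro t
    induction t with
    | zero => intro x y; simp
    | succ n ih =>
      intro x y
      rw [Function.iterate_succ_apply', Function.iterate_succ_apply',
        Function.iterate_succ_apply', ih, hadd]
  have hiter_zero : ∀ t : ℕ, Φ^[t] (0 : M) = 0 := by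
    intro t
    induction t with
    | zero => rfl
    | succ n ih => rw [Function.iterate_succ_apply', ih, hadd0]
  have hiter_sum : ∀ (t : ℕ) (g : Fin k → M),
      Φ^[t] (∑ j, g j) = ∑ j, Φ^[t] (g j) := by
    intro t g
    exact map_sum (AddMonoidHom.mk' Φ^[t] (fun a b => hiter_add t a b)) g Finset.univ
  -- shifting a single
  have hsingle_shift : ∀ (a : Fin f) (c : R),
      (fun i => (Pi.single a c : Fin f → R) (i - 1)) = Pi.single (a + 1) c := by
    intro a c
    funext i
    simp [Pi.single_apply, sub_eq_iff_eq_add]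
  have hiter_single : ∀ (t : ℕ) (a : Fin f) (c : R) (x : M),
      Φ^[t] ((Pi.single a c : Fin f → R) • x)
        = (Pi.single (a + (t : Fin f)) c : Fin f → R) • Φ^[t] x := by
    intro t
    induction t with
    | zero => intro a c x; simp
    | succ n ih =>
      intro a c x
      have hc : ((n + 1 : ℕ) : Fin f) = (n : Fin f) + 1 := by push_cast; ring
      rw [Function.iterate_succ_apply', Function.iterate_succ_apply', ih, hsemi,
        hsingle_shift, hc, add_assoc]
  -- idempotent algebra
  have horth : ∀ (a b : Fin f) (c d : R) (x : M), a ≠ b →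
      (Pi.single a c : Fin f → R) • (Pi.single b d : Fin f → R) • x = 0 := by
    intro a b c d x h
    rw [smul_smul]
    have hz : (Pi.single a c * Pi.single b d : Fin f → R) = 0 := by
      funext i
      simp only [Pi.mul_apply, Pi.single_apply, Pi.zero_apply]
      rcases eq_or_ne i a with h1 | h1 <;> rcases eq_or_ne i b with h2 | h2 <;> simp_all
    rw [hz, zero_smul]
  have hsame : ∀ (a : Fin f) (c d : R) (x : M),
      (Pi.single a c : Fin f → R) • (Pi.single a d : Fin f → R) • x
        = (Pi.single a (c * d) : Fin f → R) • x := by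
    intro a c d x
    rw [smul_smul]
    congr 1
    funext i
    simp only [Pi.mul_apply, Pi.single_apply]
    split_ifs <;> simp
  have hmul : ∀ (t : Fin f) (s : Fin f → R),
      (Pi.single t (1 : R) : Fin f → R) * s = Pi.single t (s t) := by
    intro t s
    funext i
    simp only [Pi.mul_apply, Pi.single_apply]
    split_ifs with h
    · rw [one_mul, h]
    · rw [zero_mul]
  -- each Φ^[b] (v j) lies in the b-th component
  have hfix : ∀ (b : ℕ) (j : Fin k),
      (Pi.single ((b : Fin f)) (1 : R) : Fin f → R) • Φ^[b] (v j) = Φ^[b] (v j) := by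
    intro b j
    have h1 := hiter_single b 0 1 (v j)
    rw [hv0 j, zero_add] at h1
    exact h1.symm
  -- projection lemma
  have hproj : ∀ (t : Fin f) (c : R) (j : Fin k),
      (Pi.single t c : Fin f → R) • (∑ s ∈ Finset.range f, Φ^[s] (v j))
        = (Pi.single t c : Fin f → R) • Φ^[t.val] (v j) := by
    intro t c j
    rw [Finset.smul_sum]
    refine Finset.sum_eq_single t.val ?_ ?_
    · intro b hb hne
      have hv : ((b : Fin f)).val = b := Fin.val_cast_of_lt (Finset.mem_range.mp hb)
      have hb' : (b : Fin f) ≠ t := by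
        intro h
        exact hne (hv.symm.trans (congrArg Fin.val h))
      rw [← hfix b j]
      exact horth t (b : Fin f) c 1 _ (Ne.symm hb')
    · intro h
      exact absurd (Finset.mem_range.mpr t.isLt) h
  constructor
  · -- linear independence
    rw [Fintype.linearIndependent_iff]
    intro g hg j
    have hg' : ∑ j, g j • (∑ s ∈ Finset.range f, Φ^[s] (v j)) = 0 := by
      simpa using hg
    funext t
    have h2 : ∑ j, (Pi.single t (1 : R) : Fin f → R) • (g j • (∑ s ∈ Finset.range f, Φ^[s] (v j))) = 0 := by
      rw [← Finset.smul_sum, hg', smul_zero]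
    have h3 : ∀ j : Fin k,
        (Pi.single t (1 : R) : Fin f → R) • (g j • (∑ s ∈ Finset.range f, Φ^[s] (v j)))
          = (Pi.single t (g j t) : Fin f → R) • Φ^[t.val] (v j) := by
      intro j
      rw [smul_smul, hmul, hproj]
    rw [Finset.sum_congr rfl (fun j _ => h3 j)] at h2
    have h4 : Φ^[t.val] (∑ j, (Pi.single 0 (g j t) : Fin f → R) • v j) = 0 := by
      have h5 : ∀ j : Fin k,
          Φ^[t.val] ((Pi.single 0 (g j t) : Fin f → R) • v j)
            = (Pi.single t (g j t) : Fin f → R) • Φ^[t.val] (v j) := by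
        intro j
        rw [hiter_single, zero_add, Fin.cast_val_eq_self]
      rw [hiter_sum, Finset.sum_congr rfl (fun j _ => h5 j), h2]
    have h6 : ∑ j, (Pi.single 0 (g j t) : Fin f → R) • v j = 0 := by
      apply (hbij.iterate t.val).injective
      rw [h4, hiter_zero]
    have h7 := hli (fun j => g j t) h6
    exact congrFun h7 j
  · -- spanning
    rw [Submodule.eq_top_iff']
    intro x
    have hone : (∑ t : Fin f, (Pi.single t (1 : R) : Fin f → R)) = 1 := by
      simpa using Finset.univ_sum_single (1 : Fin f → R)
    have hx : x = ∑ t : Fin f, (Pi.single t (1 : R) : Fin f → R) • x := by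
      rw [← Finset.sum_smul, hone, one_smul]
    rw [hx]
    apply Submodule.sum_mem
    intro t _
    obtain ⟨u, hu⟩ := (hbij.iterate t.val).surjective ((Pi.single t (1 : R) : Fin f → R) • x)
    have hufix : (Pi.single 0 (1 : R) : Fin f → R) • u = u := by
      apply (hbij.iterate t.val).injective
      rw [hiter_single, zero_add, Fin.cast_val_eq_self, hu, hsame, one_mul]
    obtain ⟨c, hc⟩ := hspan u hufix
    have hxu : (Pi.single t (1 : R) : Fin f → R) • x
        = ∑ j, (Pi.single t (c j) : Fin f → R) • (∑ s ∈ Finset.range f, Φ^[s] (v j)) := by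
      rw [← hu, hc, hiter_sum]
      refine Finset.sum_congr rfl ?_
      intro j _
      rw [hiter_single, zero_add, Fin.cast_val_eq_self, hproj]
    rw [hxu]
    apply Submodule.sum_mem
    intro j _
    exact Submodule.smul_mem _ _ (Submodule.subset_span ⟨j, rfl⟩)
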